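/- Let G be a countable group, let V be an infinite-dimensional complex Banach space, and let ρ : G →* (V →ₗ[ℂ] V) be a monoid homomorphism into the linear endomorphisms of V (a linear representation, not assumed continuous). Then there exists a (not necessarily closed) linear subspace p ⊆ V that is G-invariant (ρ(g)v ∈ p for all g ∈ G, v ∈ p) with p ≠ {0} and p ≠ V. In other words, no linear representation of a countable group on an infinite-dimensional Banach space is algebraically irreducible. -/

import Mathlib

open Set Submodule

lemma fin_of_countable_span {V : Type*} [NormedAddCommGroup V] [NormedSpace ℂ V]
    [CompleteSpace V] (s : Set V) (hs : s.Countable)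
    (h : Submodule.span ℂ s = ⊤) : FiniteDimensional ℂ V := by
  rcases s.eq_empty_or_nonempty with rfl | hne
  · simp only [Submodule.span_empty] at h
    have : Subsingleton V := by
      constructor; intro a b
      have ha : a ∈ (⊥ : Submodule ℂ V) := h ▸ Submodule.mem_top
      have hb : b ∈ (⊥ : Submodule ℂ V) := h ▸ Submodule.mem_top
      simp only [Submodule.mem_bot] at ha hb; rw [ha, hb]
    exact Module.finite_of_rank_eq_zero (by simp [rank_subsingleton'])
  · obtain ⟨f, rfl⟩ := hs.exists_eq_range hne
    set S : ℕ → Submodule ℂ V := fun n => Submodule.span ℂ (f '' Set.Iic n) with hS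
    have hfd : ∀ n, FiniteDimensional ℂ (S n) := fun n =>
      FiniteDimensional.span_of_finite ℂ ((Set.finite_Iic n).image f)
    have hclosed : ∀ n, IsClosed ((S n) : Set V) := fun n =>
      (S n).closed_of_finiteDimensional
    have hcover : (⋃ n, ((S n) : Set V)) = Set.univ := by
      ext x
      simp only [Set.mem_iUnion, Set.mem_univ, iff_true]
      have hx : x ∈ Submodule.span ℂ (Set.range f) := h ▸ Submodule.mem_top
      obtain ⟨t, hts, hxt⟩ := Submodule.mem_span_finite_of_mem_span hx
      obtain ⟨t', ht'⟩ : ∃ t' : Finset ℕ, (t : Set V) = f '' t' := by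
        have : ∀ x ∈ t, ∃ n, f n = x := fun x hx => hts hx
        choose g hg using this
        refine ⟨t.attach.image fun x => g x.1 x.2, ?_⟩
        ext y
        simp only [Finset.coe_image, Set.mem_image, Finset.mem_coe, Finset.mem_image,
          Finset.mem_attach, true_and, Subtype.exists]
        constructor
        · intro hy; exact ⟨_, ⟨y, hy, rfl⟩, hg y hy⟩
        · rintro ⟨n, ⟨z, hz, rfl⟩, rfl⟩; rw [hg z hz]; exact hz
      rw [ht'] at hxt
      rcases t'.eq_empty_or_nonempty with rfl | htne
      · refine ⟨0, ?_⟩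
        simp only [Finset.coe_empty, Set.image_empty, Submodule.span_empty,
          Submodule.mem_bot] at hxt
        simp [hxt]
      · obtain ⟨n, hn⟩ := t'.exists_le
        refine ⟨n, Submodule.span_mono (Set.image_mono (f := f) ?_) hxt⟩
        intro m hm; exact hn m hm
    obtain ⟨n, hn⟩ := nonempty_interior_of_iUnion_of_closed hclosed hcover
    have : S n = ⊤ := (S n).eq_top_of_nonempty_interior' hn
    haveI : FiniteDimensional ℂ (⊤ : Submodule ℂ V) := this ▸ hfd n
    exact (Submodule.topEquiv : (⊤ : Submodule ℂ V) ≃ₗ[ℂ] V).finiteDimensional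

theorem stmt_9 (G : Type*) [Group G] [Countable G]
    (V : Type*) [NormedAddCommGroup V] [NormedSpace ℂ V] [CompleteSpace V]
    (hinf : ¬ FiniteDimensional ℂ V)
    (ρ : G →* (V →ₗ[ℂ] V)) :
    ∃ p : Submodule ℂ V, (∀ g : G, ∀ v ∈ p, ρ g v ∈ p) ∧ p ≠ ⊥ ∧ p ≠ ⊤ := by
  have : Nontrivial V := by
    by_contra hn
    have : Subsingleton V := not_nontrivial_iff_subsingleton.mp hn
    exact hinf (Module.finite_of_rank_eq_zero (by simp [rank_subsingleton']))
  obtain ⟨v, hv⟩ := exists_ne (0 : V)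
  refine ⟨Submodule.span ℂ (Set.range fun g => ρ g v), ?_, ?_, ?_⟩
  · intro g w hw
    have hmap : Submodule.map (ρ g) (Submodule.span ℂ (Set.range fun g => ρ g v)) ≤
        Submodule.span ℂ (Set.range fun g => ρ g v) := by
      rw [Submodule.map_span]
      apply Submodule.span_mono
      rintro _ ⟨_, ⟨h, rfl⟩, rfl⟩
      exact ⟨g * h, by simp [map_mul]⟩
    exact hmap ⟨w, hw, rfl⟩
  · intro hbot
    have : v ∈ Submodule.span ℂ (Set.range fun g => ρ g v) :=
      Submodule.subset_span ⟨1, by simp⟩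
    rw [hbot, Submodule.mem_bot] at this
    exact hv this
  · intro htop
    exact hinf (fin_of_countable_span _ (Set.countable_range _) htop)
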